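/- For 0 ≤ s < n/2, the Radon transform R_s : L²(P_s) → L²(P_{s+1}) is injective. -/

import Mathlib

open Finset

/-- `Pset n s` is the set of `s`-element subsets of `{1,…,n}`. -/
abbrev Pset (n s : ℕ) := {X : Finset (Fin n) // X.card = s}

/-- The Radon transform `R_s : L²(P_s) → L²(P_{s+1})`. -/
noncomputable def Radon (n s : ℕ) (f : Pset n s → ℂ) (X : Pset n (s + 1)) : ℂ :=
  ∑ Z : Pset n s, if Z.1 ⊆ X.1 then f Z else 0


lemma card_filter_superset {n : ℕ} (T : Finset (Fin n)) (k : ℕ) :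
    (((Finset.univ : Finset (Fin n)).powersetCard k).filter (fun X => T ⊆ X)).card
      = if T.card ≤ k then (n - T.card).choose (k - T.card) else 0 := by
  split_ifs with hk
  · have : (((Finset.univ : Finset (Fin n)).powersetCard k).filter (fun X => T ⊆ X)).card
        = (Tᶜ.powersetCard (k - T.card)).card := by
      apply Finset.card_nbij' (fun X => X \ T) (fun Y => Y ∪ T)
      · intro X hX
        simp only [Finset.mem_coe, Finset.mem_filter, Finset.mem_powersetCard_univ] at hX
        rw [Finset.mem_coe, Finset.mem_powersetCard]
        exact ⟨fun x hx => by simp_all [Finset.mem_sdiff, Finset.mem_compl] ,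
          by rw [Finset.card_sdiff_of_subset hX.2, hX.1]⟩
      · intro Y hY
        rw [Finset.mem_coe, Finset.mem_powersetCard] at hY
        simp only [Finset.mem_coe, Finset.mem_filter, Finset.mem_powersetCard_univ]
        constructor
        · rw [Finset.card_union_of_disjoint, hY.2]
          · omega
          · exact Finset.disjoint_left.mpr fun a ha => by
              have := hY.1 ha; simp [Finset.mem_compl] at this; exact this
        · exact Finset.subset_union_right
      · intro X hX
        simp only [Finset.mem_coe, Finset.mem_filter] at hX
        exact Finset.sdiff_union_of_subset hX.2
      · intro Y hY
        rw [Finset.mem_coe, Finset.mem_powersetCard] at hY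
        dsimp only
        rw [Finset.union_sdiff_right]
        exact Finset.sdiff_eq_self_of_disjoint (Finset.disjoint_left.mpr fun a ha => by
          have := hY.1 ha; simp [Finset.mem_compl] at this; exact this)
    rw [this, Finset.card_powersetCard, Finset.card_compl, Fintype.card_fin]
  · rw [Finset.card_eq_zero, Finset.filter_eq_empty_iff]
    intro X hX hTX
    rw [Finset.mem_powersetCard_univ] at hX
    exact hk (hX ▸ Finset.card_le_card hTX)

lemma count_eq {n s : ℕ} (hn : 2 * (s + 1) ≤ n) (Z W : Finset (Fin n))
    (hZ : Z.card = s + 1) (hW : W.card = s + 1) :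
    ((((Finset.univ : Finset (Fin n)).powersetCard (s + 2)).filter
        (fun X => Z ⊆ X ∧ W ⊆ X)).card : ℂ)
      = ((((Finset.univ : Finset (Fin n)).powersetCard s).filter
          (fun Y => Y ⊆ Z ∧ Y ⊆ W)).card : ℂ)
        + if Z = W then (n : ℂ) - 2 * (s + 1) else 0 := by
  have hU : (((Finset.univ : Finset (Fin n)).powersetCard (s + 2)).filter
      (fun X => Z ⊆ X ∧ W ⊆ X)).card
      = if (Z ∪ W).card ≤ s + 2 then (n - (Z ∪ W).card).choose (s + 2 - (Z ∪ W).card)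
        else 0 := by
    rw [← card_filter_superset]
    congr 1
    ext X
    simp [Finset.union_subset_iff]
  have hD : (((Finset.univ : Finset (Fin n)).powersetCard s).filter
      (fun Y => Y ⊆ Z ∧ Y ⊆ W)).card = (Z ∩ W).card.choose s := by
    rw [← Finset.card_powersetCard s (Z ∩ W)]
    congr 1
    ext Y
    simp only [Finset.mem_filter, Finset.mem_powersetCard_univ, Finset.mem_powersetCard,
      Finset.subset_inter_iff]
    aesop
  have hsum : (Z ∪ W).card + (Z ∩ W).card = 2 * (s + 1) := by
    rw [Finset.card_union_add_card_inter, hZ, hW]; ring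
  by_cases hZW : Z = W
  · subst hZW
    rw [hU, hD]
    simp only [Finset.union_self, Finset.inter_self, hZ]
    rw [if_pos (by omega)]
    have h1 : s + 2 - (s + 1) = 1 := by omega
    rw [h1, Nat.choose_one_right, Nat.choose_succ_self_right]
    simp only [if_true]
    have : (s + 1 : ℕ) ≤ n := by omega
    push_cast [Nat.cast_sub this]
    ring
  · have hm : (Z ∩ W).card ≤ s := by
      by_contra hc
      push_neg at hc
      have h1 : (Z ∩ W).card = s + 1 := le_antisymm (hZ ▸ Finset.card_le_card Finset.inter_subset_left) hc
      have h2 : Z ∩ W = Z := Finset.eq_of_subset_of_card_le Finset.inter_subset_left (by omega)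
      have h3 : Z ∩ W = W := Finset.eq_of_subset_of_card_le Finset.inter_subset_right (by omega)
      exact hZW (h2 ▸ h3)
    rw [hU, hD, if_neg hZW, add_zero]
    by_cases hms : (Z ∩ W).card = s
    · have hu : (Z ∪ W).card = s + 2 := by omega
      rw [hu, if_pos le_rfl, hms]
      simp
    · have hlt : (Z ∩ W).card < s := lt_of_le_of_ne hm hms
      rw [if_neg (by omega), Nat.choose_eq_zero_of_lt hlt]
/-- The dual (down) Radon transform. -/
noncomputable def Dual (n s : ℕ) (f : Pset n (s + 1) → ℂ) (Y : Pset n s) : ℂ :=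
  ∑ Z : Pset n (s + 1), if Y.1 ⊆ Z.1 then f Z else 0

lemma sum_ite_subtype {n k : ℕ} (p : Finset (Fin n) → Prop) [DecidablePred p] (c : ℂ) :
    ∑ X : Pset n k, (if p X.1 then c else 0)
      = ((((Finset.univ : Finset (Fin n)).powersetCard k).filter p).card : ℂ) * c := by
  rw [← Finset.sum_subtype ((Finset.univ : Finset (Fin n)).powersetCard k)
    (fun X => Finset.mem_powersetCard_univ) (fun X => if p X then c else 0)]
  rw [← Finset.sum_filter, Finset.sum_const, nsmul_eq_mul]

set_option maxHeartbeats 1000000 in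
lemma key {n s : ℕ} (hn : 2 * (s + 1) ≤ n) (f : Pset n (s + 1) → ℂ) :
    ∑ X : Pset n (s + 1 + 1), Radon n (s + 1) f X * (starRingEnd ℂ) (Radon n (s + 1) f X)
      = ∑ Y : Pset n s, Dual n s f Y * (starRingEnd ℂ) (Dual n s f Y)
        + ((n : ℂ) - 2 * (s + 1)) * ∑ Z : Pset n (s + 1), f Z * (starRingEnd ℂ) (f Z) := by
  have expandU : ∀ X : Pset n (s + 1 + 1),
      Radon n (s + 1) f X * (starRingEnd ℂ) (Radon n (s + 1) f X)
      = ∑ Z : Pset n (s + 1), ∑ W : Pset n (s + 1),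
          (if Z.1 ⊆ X.1 ∧ W.1 ⊆ X.1 then f Z * (starRingEnd ℂ) (f W) else 0) := by
    intro X
    unfold Radon
    rw [map_sum, Finset.sum_mul_sum]
    refine Finset.sum_congr rfl fun Z _ => Finset.sum_congr rfl fun W _ => ?_
    split_ifs with h1 h2 h3 <;> simp_all
  have expandD : ∀ Y : Pset n s,
      Dual n s f Y * (starRingEnd ℂ) (Dual n s f Y)
      = ∑ Z : Pset n (s + 1), ∑ W : Pset n (s + 1),
          (if Y.1 ⊆ Z.1 ∧ Y.1 ⊆ W.1 then f Z * (starRingEnd ℂ) (f W) else 0) := by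
    intro Y
    unfold Dual
    rw [map_sum, Finset.sum_mul_sum]
    refine Finset.sum_congr rfl fun Z _ => Finset.sum_congr rfl fun W _ => ?_
    split_ifs with h1 h2 h3 <;> simp_all
  calc ∑ X : Pset n (s + 1 + 1), Radon n (s + 1) f X * (starRingEnd ℂ) (Radon n (s + 1) f X)
      = ∑ Z : Pset n (s + 1), ∑ W : Pset n (s + 1),
          ((((Finset.univ : Finset (Fin n)).powersetCard (s + 2)).filter
            (fun X => Z.1 ⊆ X ∧ W.1 ⊆ X)).card : ℂ) * (f Z * (starRingEnd ℂ) (f W)) := by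
        simp_rw [expandU]
        rw [Finset.sum_comm]
        refine Finset.sum_congr rfl fun Z _ => ?_
        rw [Finset.sum_comm]
        refine Finset.sum_congr rfl fun W _ => ?_
        exact sum_ite_subtype (fun X => Z.1 ⊆ X ∧ W.1 ⊆ X) _
    _ = ∑ Z : Pset n (s + 1), ∑ W : Pset n (s + 1),
          (((((Finset.univ : Finset (Fin n)).powersetCard s).filter
            (fun Y => Y ⊆ Z.1 ∧ Y ⊆ W.1)).card : ℂ)
            + if Z.1 = W.1 then (n : ℂ) - 2 * (s + 1) else 0) * (f Z * (starRingEnd ℂ) (f W)) := by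
        refine Finset.sum_congr rfl fun Z _ => Finset.sum_congr rfl fun W _ => ?_
        rw [count_eq hn Z.1 W.1 Z.2 W.2]
    _ = ∑ Y : Pset n s, Dual n s f Y * (starRingEnd ℂ) (Dual n s f Y)
        + ((n : ℂ) - 2 * (s + 1)) * ∑ Z : Pset n (s + 1), f Z * (starRingEnd ℂ) (f Z) := by
        simp_rw [add_mul, Finset.sum_add_distrib]
        congr 1
        · refine Eq.symm ?_
          simp_rw [expandD]
          rw [Finset.sum_comm]
          refine Finset.sum_congr rfl fun Z _ => ?_
          rw [Finset.sum_comm]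
          refine Finset.sum_congr rfl fun W _ => ?_
          exact sum_ite_subtype (fun Y => Y ⊆ Z.1 ∧ Y ⊆ W.1) _
        · rw [Finset.mul_sum]
          refine Finset.sum_congr rfl fun Z _ => ?_
          rw [Finset.sum_eq_single Z]
          · simp
          · intro W _ hW
            rw [if_neg (fun h => hW (Subtype.ext h.symm)), zero_mul]
          · simp

lemma radon_inj_zero {n s : ℕ} (h : 2 * s < n) (f : Pset n s → ℂ)
    (hf : Radon n s f = 0) : f = 0 := by
  match s with
  | 0 =>
    haveI : Unique (Pset n 0) := ⟨⟨⟨∅, rfl⟩⟩, fun a => Subtype.ext (Finset.card_eq_zero.mp a.2)⟩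
    have hn : 0 < n := by omega
    set X : Pset n 1 := ⟨{⟨0, hn⟩}, Finset.card_singleton _⟩ with hX
    have h0 : Radon n 0 f X = 0 := by rw [hf]; rfl
    have h1 : Radon n 0 f X = f default := by
      rw [Radon, Fintype.sum_unique, if_pos (show (default : Pset n 0).1 ⊆ X.1 from
        (Finset.card_eq_zero.mp (default : Pset n 0).2) ▸ Finset.empty_subset _)]
    funext Z
    rw [Unique.eq_default Z, Pi.zero_apply, ← h1, h0]
  | r + 1 =>
    have hn : 2 * (r + 1) ≤ n := by omega
    have hk := key hn f
    simp only [hf, Pi.zero_apply, map_zero, mul_zero, Finset.sum_const_zero] at hk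
    simp_rw [Complex.mul_conj] at hk
    have hreal : 0 = (∑ Y : Pset n r, Complex.normSq (Dual n r f Y))
        + ((n : ℝ) - 2 * (r + 1)) * ∑ Z : Pset n (r + 1), Complex.normSq (f Z) := by
      exact_mod_cast hk
    have hA : 0 ≤ ∑ Y : Pset n r, Complex.normSq (Dual n r f Y) :=
      Finset.sum_nonneg fun _ _ => Complex.normSq_nonneg _
    have hB : 0 ≤ ∑ Z : Pset n (r + 1), Complex.normSq (f Z) :=
      Finset.sum_nonneg fun _ _ => Complex.normSq_nonneg _
    have hc : (0 : ℝ) < (n : ℝ) - 2 * (r + 1) := by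
      have : (2 * (r + 1) : ℝ) < n := by exact_mod_cast h
      linarith
    have hBz : ∑ Z : Pset n (r + 1), Complex.normSq (f Z) = 0 := by nlinarith
    funext Z
    have hz := (Finset.sum_eq_zero_iff_of_nonneg
      (fun i _ => Complex.normSq_nonneg (f i))).mp hBz Z (Finset.mem_univ Z)
    simpa using Complex.normSq_eq_zero.mp hz

/-- For `0 ≤ s < n/2`, the Radon transform `R_s : L²(P_s) → L²(P_{s+1})` is injective. -/
theorem stmt5 (n s : ℕ) (h : 2 * s < n) : Function.Injective (Radon n s) := by
  intro f g hfg
  have hsub : Radon n s (f - g) = 0 := by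
    funext X
    have hlin : Radon n s (f - g) X = Radon n s f X - Radon n s g X := by
      rw [Radon, Radon, Radon, ← Finset.sum_sub_distrib]
      refine Finset.sum_congr rfl fun Z _ => ?_
      split_ifs <;> simp
    rw [Pi.zero_apply, hlin, hfg, sub_self]
  have := radon_inj_zero h (f - g) hsub
  funext x
  have hx := congrFun this x
  simpa [sub_eq_zero] using hx
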